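/- In the setting of the 4n-dimensional model space T = E⊗H with the algebraic conformal-Killing operator 𝒯(γ⊗α)(X) = (4/5)γ(X)α + (1/5)γ∧i_X α − (1/(4n−3))X∧i_γ α, the double ω_H-contraction composed with ω_E-contraction of 𝒯(γ₀⊗α₀) applied to γ₀⊗α₀ (γ₀, α₀ as in the paper), then fully contracted with ω_E once more, yields 𝒯_{HE}(γ₀α₀) = (8n(2n+1)/(5(4n−3))) h⊗e₂, which is nonzero for n ≥ 2. -/

import Mathlib

open scoped BigOperators TensorProduct

/-- wedge of two vectors in the exterior algebra -/
noncomputable def wedge2 {T : Type*} [AddCommGroup T] [Module ℂ T] (x₁ x₂ : T) :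
    ExteriorAlgebra ℂ T :=
  ExteriorAlgebra.ι ℂ x₁ * ExteriorAlgebra.ι ℂ x₂

/-- wedge of three vectors in the exterior algebra -/
noncomputable def wedge3 {T : Type*} [AddCommGroup T] [Module ℂ T] (x₁ x₂ x₃ : T) :
    ExteriorAlgebra ℂ T :=
  ExteriorAlgebra.ι ℂ x₁ * ExteriorAlgebra.ι ℂ x₂ * ExteriorAlgebra.ι ℂ x₃

/-- wedge of four vectors in the exterior algebra -/
noncomputable def wedge4 {T : Type*} [AddCommGroup T] [Module ℂ T] (x₁ x₂ x₃ x₄ : T) :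
    ExteriorAlgebra ℂ T :=
  ExteriorAlgebra.ι ℂ x₁ * ExteriorAlgebra.ι ℂ x₂ * ExteriorAlgebra.ι ℂ x₃ *
    ExteriorAlgebra.ι ℂ x₄

/-- the element `α₀ = e₁h∧e₂h∧Σᵢ eᵢh̃∧ẽᵢh̃ − e₁h̃∧e₂h̃∧Σᵢ eᵢh∧ẽᵢh` -/
noncomputable def alpha0 (n : ℕ) (hn : 2 ≤ n) {E H : Type*}
    [AddCommGroup E] [Module ℂ E] [AddCommGroup H] [Module ℂ H]
    (e te : Fin n ⊕ Fin n → E) (h th : H) : ExteriorAlgebra ℂ (E ⊗[ℂ] H) :=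
  (∑ i : Fin n ⊕ Fin n,
      wedge4 (e (Sum.inl ⟨0, by omega⟩) ⊗ₜ h) (e (Sum.inl ⟨1, by omega⟩) ⊗ₜ h)
        (e i ⊗ₜ th) (te i ⊗ₜ th))
  - ∑ i : Fin n ⊕ Fin n,
      wedge4 (e (Sum.inl ⟨0, by omega⟩) ⊗ₜ th) (e (Sum.inl ⟨1, by omega⟩) ⊗ₜ th)
        (e i ⊗ₜ h) (te i ⊗ₜ h)

/-- the value `𝒯(γ₀⊗α₀)(X) = (4/5)⟨γ₀,X⟩α₀ + (1/5)γ₀∧i_Xα₀ − (1/(4n−3))X∧i_{γ₀}α₀` -/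
noncomputable def Tcal (n : ℕ) {E H : Type*}
    [AddCommGroup E] [Module ℂ E] [AddCommGroup H] [Module ℂ H]
    (B : E ⊗[ℂ] H →ₗ[ℂ] E ⊗[ℂ] H →ₗ[ℂ] ℂ)
    (ic : E ⊗[ℂ] H →ₗ[ℂ]
      ExteriorAlgebra ℂ (E ⊗[ℂ] H) →ₗ[ℂ] ExteriorAlgebra ℂ (E ⊗[ℂ] H))
    (γ0 : E ⊗[ℂ] H) (α0 : ExteriorAlgebra ℂ (E ⊗[ℂ] H)) (X : E ⊗[ℂ] H) :
    ExteriorAlgebra ℂ (E ⊗[ℂ] H) :=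
  ((4 : ℂ)/5) • (B γ0 X • α0) + ((1 : ℂ)/5) • (ExteriorAlgebra.ι ℂ γ0 * ic X α0)
    - ((1 : ℂ)/(4*n - 3)) • (ExteriorAlgebra.ι ℂ X * ic γ0 α0)

/-- the 1-form `𝒯(γ₀⊗α₀)` as an element of `T ⊗ Λ⁴T` via the metric duality
(the dual basis of `{eᵢ⊗h, eᵢ⊗h̃}` is `{ẽᵢ⊗h̃, −ẽᵢ⊗h}`) -/
noncomputable def Xi (n : ℕ) {E H : Type*}
    [AddCommGroup E] [Module ℂ E] [AddCommGroup H] [Module ℂ H]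
    (e te : Fin n ⊕ Fin n → E) (h th : H)
    (B : E ⊗[ℂ] H →ₗ[ℂ] E ⊗[ℂ] H →ₗ[ℂ] ℂ)
    (ic : E ⊗[ℂ] H →ₗ[ℂ]
      ExteriorAlgebra ℂ (E ⊗[ℂ] H) →ₗ[ℂ] ExteriorAlgebra ℂ (E ⊗[ℂ] H))
    (γ0 : E ⊗[ℂ] H) (α0 : ExteriorAlgebra ℂ (E ⊗[ℂ] H)) :
    (E ⊗[ℂ] H) ⊗[ℂ] ExteriorAlgebra ℂ (E ⊗[ℂ] H) :=
  ∑ i : Fin n ⊕ Fin n,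
    ((te i ⊗ₜ th) ⊗ₜ Tcal n B ic γ0 α0 (e i ⊗ₜ h)
      - (te i ⊗ₜ h) ⊗ₜ Tcal n B ic γ0 α0 (e i ⊗ₜ th))


section wedgelemmas
variable {T : Type*} [AddCommGroup T] [Module ℂ T]

lemma wedge3_neg₁ (x y z : T) : wedge3 (-x) y z = -wedge3 x y z := by
  simp [wedge3]
lemma wedge3_neg₂ (x y z : T) : wedge3 x (-y) z = -wedge3 x y z := by
  simp [wedge3]
lemma wedge3_neg₃ (x y z : T) : wedge3 x y (-z) = -wedge3 x y z := by
  simp [wedge3]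
lemma wedge4_neg₁ (x y z w : T) : wedge4 (-x) y z w = -wedge4 x y z w := by
  simp [wedge4]
lemma wedge4_neg₂ (x y z w : T) : wedge4 x (-y) z w = -wedge4 x y z w := by
  simp [wedge4]
lemma wedge4_neg₃ (x y z w : T) : wedge4 x y (-z) w = -wedge4 x y z w := by
  simp [wedge4]
lemma wedge4_neg₄ (x y z w : T) : wedge4 x y z (-w) = -wedge4 x y z w := by
  simp [wedge4]
lemma hmul3 (x y z w : T) :
    ExteriorAlgebra.ι ℂ x * wedge3 y z w = wedge4 x y z w := by
  simp [wedge3, wedge4, mul_assoc]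

end wedgelemmas

/-- auxiliary: the result of the `D3∘D2` stage on one `(c_p,c_q)`-selected term. -/
noncomputable def gterm {E H : Type*}
    [AddCommGroup E] [Module ℂ E] [AddCommGroup H] [Module ℂ H]
    (ωE : E →ₗ[ℂ] E →ₗ[ℂ] ℂ) (ωH : H →ₗ[ℂ] H →ₗ[ℂ] ℂ)
    (a : E) (w : H) (ar : E) (cr : H) (as' : E) (cs : H) : H ⊗[ℂ] E :=
  (ωH w cr * ωE a ar) • (cs ⊗ₜ as') - (ωH w cs * ωE a as') • (cr ⊗ₜ ar)

set_option maxHeartbeats 2000000 in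
lemma phi {E H : Type*}
    [AddCommGroup E] [Module ℂ E] [AddCommGroup H] [Module ℂ H]
    (ωE : E →ₗ[ℂ] E →ₗ[ℂ] ℂ) (ωH : H →ₗ[ℂ] H →ₗ[ℂ] ℂ)
    (C4 : ExteriorAlgebra ℂ (E ⊗[ℂ] H) →ₗ[ℂ]
      H ⊗[ℂ] (H ⊗[ℂ] ExteriorAlgebra ℂ (E ⊗[ℂ] H)))
    (hC4 : ∀ (a₁ a₂ a₃ a₄ : E) (c₁ c₂ c₃ c₄ : H),
      C4 (wedge4 (a₁ ⊗ₜ c₁) (a₂ ⊗ₜ c₂) (a₃ ⊗ₜ c₃) (a₄ ⊗ₜ c₄))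
        = ωE a₁ a₂ • (c₁ ⊗ₜ (c₂ ⊗ₜ wedge2 (a₃ ⊗ₜ c₃) (a₄ ⊗ₜ c₄))
            + c₂ ⊗ₜ (c₁ ⊗ₜ wedge2 (a₃ ⊗ₜ c₃) (a₄ ⊗ₜ c₄)))
        - ωE a₁ a₃ • (c₁ ⊗ₜ (c₃ ⊗ₜ wedge2 (a₂ ⊗ₜ c₂) (a₄ ⊗ₜ c₄))
            + c₃ ⊗ₜ (c₁ ⊗ₜ wedge2 (a₂ ⊗ₜ c₂) (a₄ ⊗ₜ c₄)))
        + ωE a₁ a₄ • (c₁ ⊗ₜ (c₄ ⊗ₜ wedge2 (a₂ ⊗ₜ c₂) (a₃ ⊗ₜ c₃))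
            + c₄ ⊗ₜ (c₁ ⊗ₜ wedge2 (a₂ ⊗ₜ c₂) (a₃ ⊗ₜ c₃)))
        + ωE a₂ a₃ • (c₂ ⊗ₜ (c₃ ⊗ₜ wedge2 (a₁ ⊗ₜ c₁) (a₄ ⊗ₜ c₄))
            + c₃ ⊗ₜ (c₂ ⊗ₜ wedge2 (a₁ ⊗ₜ c₁) (a₄ ⊗ₜ c₄)))
        - ωE a₂ a₄ • (c₂ ⊗ₜ (c₄ ⊗ₜ wedge2 (a₁ ⊗ₜ c₁) (a₃ ⊗ₜ c₃))
            + c₄ ⊗ₜ (c₂ ⊗ₜ wedge2 (a₁ ⊗ₜ c₁) (a₃ ⊗ₜ c₃)))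
        + ωE a₃ a₄ • (c₃ ⊗ₜ (c₄ ⊗ₜ wedge2 (a₁ ⊗ₜ c₁) (a₂ ⊗ₜ c₂))
            + c₄ ⊗ₜ (c₃ ⊗ₜ wedge2 (a₁ ⊗ₜ c₁) (a₂ ⊗ₜ c₂))))
    (D1 : (E ⊗[ℂ] H) ⊗[ℂ] (H ⊗[ℂ] (H ⊗[ℂ] ExteriorAlgebra ℂ (E ⊗[ℂ] H))) →ₗ[ℂ]
      E ⊗[ℂ] (H ⊗[ℂ] ExteriorAlgebra ℂ (E ⊗[ℂ] H)))
    (hD1 : ∀ (a : E) (c c₁ c₂ : H) (z : ExteriorAlgebra ℂ (E ⊗[ℂ] H)),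
      D1 ((a ⊗ₜ c) ⊗ₜ (c₁ ⊗ₜ (c₂ ⊗ₜ z))) = ωH c c₁ • (a ⊗ₜ (c₂ ⊗ₜ z)))
    (D2 : E ⊗[ℂ] (H ⊗[ℂ] ExteriorAlgebra ℂ (E ⊗[ℂ] H)) →ₗ[ℂ]
      H ⊗[ℂ] (E ⊗[ℂ] (E ⊗[ℂ] E)))
    (hD2 : ∀ (a : E) (c' : H) (b₁ b₂ : E) (d₁ d₂ : H),
      D2 (a ⊗ₜ (c' ⊗ₜ wedge2 (b₁ ⊗ₜ d₁) (b₂ ⊗ₜ d₂)))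
        = ωH c' d₁ • (d₂ ⊗ₜ (a ⊗ₜ (b₁ ⊗ₜ b₂)))
          - ωH c' d₂ • (d₁ ⊗ₜ (a ⊗ₜ (b₂ ⊗ₜ b₁))))
    (D3 : H ⊗[ℂ] (E ⊗[ℂ] (E ⊗[ℂ] E)) →ₗ[ℂ] H ⊗[ℂ] E)
    (hD3 : ∀ (d : H) (a b₁ b₂ : E),
      D3 (d ⊗ₜ (a ⊗ₜ (b₁ ⊗ₜ b₂))) = ωE a b₁ • (d ⊗ₜ b₂))
    (a : E) (c : H) (a₁ a₂ a₃ a₄ : E) (c₁ c₂ c₃ c₄ : H) :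
    D3 (D2 (D1 ((a ⊗ₜ c) ⊗ₜ
        (C4 (wedge4 (a₁ ⊗ₜ c₁) (a₂ ⊗ₜ c₂) (a₃ ⊗ₜ c₃) (a₄ ⊗ₜ c₄))))))
      = ωE a₁ a₂ • (ωH c c₁ • gterm ωE ωH a c₂ a₃ c₃ a₄ c₄
            + ωH c c₂ • gterm ωE ωH a c₁ a₃ c₃ a₄ c₄)
        - ωE a₁ a₃ • (ωH c c₁ • gterm ωE ωH a c₃ a₂ c₂ a₄ c₄
            + ωH c c₃ • gterm ωE ωH a c₁ a₂ c₂ a₄ c₄)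
        + ωE a₁ a₄ • (ωH c c₁ • gterm ωE ωH a c₄ a₂ c₂ a₃ c₃
            + ωH c c₄ • gterm ωE ωH a c₁ a₂ c₂ a₃ c₃)
        + ωE a₂ a₃ • (ωH c c₂ • gterm ωE ωH a c₃ a₁ c₁ a₄ c₄
            + ωH c c₃ • gterm ωE ωH a c₂ a₁ c₁ a₄ c₄)
        - ωE a₂ a₄ • (ωH c c₂ • gterm ωE ωH a c₄ a₁ c₁ a₃ c₃
            + ωH c c₄ • gterm ωE ωH a c₂ a₁ c₁ a₃ c₃)
        + ωE a₃ a₄ • (ωH c c₃ • gterm ωE ωH a c₄ a₁ c₁ a₂ c₂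
            + ωH c c₄ • gterm ωE ωH a c₃ a₁ c₁ a₂ c₂) := by
  rw [hC4]
  simp only [TensorProduct.tmul_add, TensorProduct.tmul_smul, TensorProduct.tmul_sub,
    map_add, map_sub, map_smul, hD1, hD2, hD3, gterm, smul_sub, smul_add, smul_smul, mul_assoc]

set_option maxHeartbeats 2000000 in
/-- `𝒯_{HE}(γ₀α₀) = (8n(2n+1)/(5(4n−3))) h⊗e₂ ≠ 0` — the composition
of the `ω_E`-contraction `Λ⁴T → S²H⊗Λ²T` (`C4`), the two `ω_H`-contractions in the
first two `H`-variables (`D1`, `D2`) and the final `ω_E`-contraction in the first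
two `E`-variables (`D3`), applied to `𝒯(γ₀⊗α₀) ∈ T⊗Λ⁴T`. -/
theorem statement_12
    (n : ℕ) (hn : 2 ≤ n)
    (E H : Type*) [AddCommGroup E] [Module ℂ E] [AddCommGroup H] [Module ℂ H]
    (ωE : E →ₗ[ℂ] E →ₗ[ℂ] ℂ) (hωEskew : ∀ u v : E, ωE u v = - ωE v u)
    (ωH : H →ₗ[ℂ] H →ₗ[ℂ] ℂ) (hωHskew : ∀ u v : H, ωH u v = - ωH v u)
    (e te : Fin n ⊕ Fin n → E)
    (hte1 : ∀ i : Fin n, te (Sum.inl i) = e (Sum.inr i))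
    (hte2 : ∀ i : Fin n, te (Sum.inr i) = - e (Sum.inl i))
    (hunit : ∀ i j : Fin n ⊕ Fin n, ωE (e i) (te j) = if i = j then 1 else 0)
    (h th : H) (hH1 : ωH h th = 1) (hH2 : ωH h h = 0) (hH3 : ωH th th = 0)
    -- bases (for the nonvanishing conclusion)
    (bE : Module.Basis (Fin n ⊕ Fin n) ℂ E) (hbE : ∀ i, bE i = e i)
    (bH : Module.Basis (Fin 2) ℂ H) (hbH0 : bH 0 = h) (hbH1 : bH 1 = th)
    -- the metric on T = E⊗H and the interior contraction
    (B : E ⊗[ℂ] H →ₗ[ℂ] E ⊗[ℂ] H →ₗ[ℂ] ℂ)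
    (hB : ∀ (a b : E) (c d : H), B (a ⊗ₜ c) (b ⊗ₜ d) = ωE a b * ωH c d)
    (ic : E ⊗[ℂ] H →ₗ[ℂ]
      ExteriorAlgebra ℂ (E ⊗[ℂ] H) →ₗ[ℂ] ExteriorAlgebra ℂ (E ⊗[ℂ] H))
    (hic : ∀ γ x₁ x₂ x₃ x₄ : E ⊗[ℂ] H,
      ic γ (wedge4 x₁ x₂ x₃ x₄)
        = B γ x₁ • wedge3 x₂ x₃ x₄ - B γ x₂ • wedge3 x₁ x₃ x₄
          + B γ x₃ • wedge3 x₁ x₂ x₄ - B γ x₄ • wedge3 x₁ x₂ x₃)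
    -- the contraction ω_E• : Λ⁴(E⊗H) → S²H ⊗ Λ²(E⊗H)
    (C4 : ExteriorAlgebra ℂ (E ⊗[ℂ] H) →ₗ[ℂ]
      H ⊗[ℂ] (H ⊗[ℂ] ExteriorAlgebra ℂ (E ⊗[ℂ] H)))
    (hC4 : ∀ (a₁ a₂ a₃ a₄ : E) (c₁ c₂ c₃ c₄ : H),
      C4 (wedge4 (a₁ ⊗ₜ c₁) (a₂ ⊗ₜ c₂) (a₃ ⊗ₜ c₃) (a₄ ⊗ₜ c₄))
        = ωE a₁ a₂ • (c₁ ⊗ₜ (c₂ ⊗ₜ wedge2 (a₃ ⊗ₜ c₃) (a₄ ⊗ₜ c₄))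
            + c₂ ⊗ₜ (c₁ ⊗ₜ wedge2 (a₃ ⊗ₜ c₃) (a₄ ⊗ₜ c₄)))
        - ωE a₁ a₃ • (c₁ ⊗ₜ (c₃ ⊗ₜ wedge2 (a₂ ⊗ₜ c₂) (a₄ ⊗ₜ c₄))
            + c₃ ⊗ₜ (c₁ ⊗ₜ wedge2 (a₂ ⊗ₜ c₂) (a₄ ⊗ₜ c₄)))
        + ωE a₁ a₄ • (c₁ ⊗ₜ (c₄ ⊗ₜ wedge2 (a₂ ⊗ₜ c₂) (a₃ ⊗ₜ c₃))
            + c₄ ⊗ₜ (c₁ ⊗ₜ wedge2 (a₂ ⊗ₜ c₂) (a₃ ⊗ₜ c₃)))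
        + ωE a₂ a₃ • (c₂ ⊗ₜ (c₃ ⊗ₜ wedge2 (a₁ ⊗ₜ c₁) (a₄ ⊗ₜ c₄))
            + c₃ ⊗ₜ (c₂ ⊗ₜ wedge2 (a₁ ⊗ₜ c₁) (a₄ ⊗ₜ c₄)))
        - ωE a₂ a₄ • (c₂ ⊗ₜ (c₄ ⊗ₜ wedge2 (a₁ ⊗ₜ c₁) (a₃ ⊗ₜ c₃))
            + c₄ ⊗ₜ (c₂ ⊗ₜ wedge2 (a₁ ⊗ₜ c₁) (a₃ ⊗ₜ c₃)))
        + ωE a₃ a₄ • (c₃ ⊗ₜ (c₄ ⊗ₜ wedge2 (a₁ ⊗ₜ c₁) (a₂ ⊗ₜ c₂))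
            + c₄ ⊗ₜ (c₃ ⊗ₜ wedge2 (a₁ ⊗ₜ c₁) (a₂ ⊗ₜ c₂))))
    -- first ω_H-contraction (form slot against the first H of S²H)
    (D1 : (E ⊗[ℂ] H) ⊗[ℂ] (H ⊗[ℂ] (H ⊗[ℂ] ExteriorAlgebra ℂ (E ⊗[ℂ] H))) →ₗ[ℂ]
      E ⊗[ℂ] (H ⊗[ℂ] ExteriorAlgebra ℂ (E ⊗[ℂ] H)))
    (hD1 : ∀ (a : E) (c c₁ c₂ : H) (z : ExteriorAlgebra ℂ (E ⊗[ℂ] H)),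
      D1 ((a ⊗ₜ c) ⊗ₜ (c₁ ⊗ₜ (c₂ ⊗ₜ z))) = ωH c c₁ • (a ⊗ₜ (c₂ ⊗ₜ z)))
    -- second ω_H-contraction, after expanding Λ²(E⊗H) ⊂ HHEE; result in H⊗E⊗E⊗E
    (D2 : E ⊗[ℂ] (H ⊗[ℂ] ExteriorAlgebra ℂ (E ⊗[ℂ] H)) →ₗ[ℂ]
      H ⊗[ℂ] (E ⊗[ℂ] (E ⊗[ℂ] E)))
    (hD2 : ∀ (a : E) (c' : H) (b₁ b₂ : E) (d₁ d₂ : H),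
      D2 (a ⊗ₜ (c' ⊗ₜ wedge2 (b₁ ⊗ₜ d₁) (b₂ ⊗ₜ d₂)))
        = ωH c' d₁ • (d₂ ⊗ₜ (a ⊗ₜ (b₁ ⊗ₜ b₂)))
          - ωH c' d₂ • (d₁ ⊗ₜ (a ⊗ₜ (b₂ ⊗ₜ b₁))))
    -- final ω_E-contraction in the first two E-variables
    (D3 : H ⊗[ℂ] (E ⊗[ℂ] (E ⊗[ℂ] E)) →ₗ[ℂ] H ⊗[ℂ] E)
    (hD3 : ∀ (d : H) (a b₁ b₂ : E),
      D3 (d ⊗ₜ (a ⊗ₜ (b₁ ⊗ₜ b₂))) = ωE a b₁ • (d ⊗ₜ b₂)) :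
    D3 (D2 (D1 ((LinearMap.lTensor (E ⊗[ℂ] H) C4)
        (Xi n e te h th B ic (te (Sum.inl ⟨0, by omega⟩) ⊗ₜ h)
          (alpha0 n hn e te h th)))))
      = ((8*n*(2*n+1) : ℂ) / (5*(4*n - 3))) • (h ⊗ₜ e (Sum.inl ⟨1, by omega⟩))
    ∧ D3 (D2 (D1 ((LinearMap.lTensor (E ⊗[ℂ] H) C4)
        (Xi n e te h th B ic (te (Sum.inl ⟨0, by omega⟩) ⊗ₜ h)
          (alpha0 n hn e te h th))))) ≠ 0 := by
    classical
    have hH4 : ωH th h = -1 := by rw [hωHskew th h, hH1]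
    have heL : ∀ (i : Fin n ⊕ Fin n) (b : Fin n),
        ωE (e i) (e (Sum.inl b)) = -(if i = Sum.inr b then 1 else 0) := by
      intro i b
      have h1 : e (Sum.inl b) = -te (Sum.inr b) := by rw [hte2, neg_neg]
      rw [h1, map_neg, hunit]
    have heR : ∀ (i : Fin n ⊕ Fin n) (b : Fin n),
        ωE (e i) (e (Sum.inr b)) = (if i = Sum.inl b then 1 else 0) := by
      intro i b; rw [← hte1, hunit]
    have hn0 : (n : ℂ) ≠ 0 := Nat.cast_ne_zero.mpr (by omega)
    have h2n1 : (2*(n:ℂ)+1) ≠ 0 := by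
      have : ((2*n+1 : ℕ) : ℂ) = 2*(n:ℂ)+1 := by push_cast; ring
      rw [← this]; exact Nat.cast_ne_zero.mpr (by omega)
    have h43 : (4*(n:ℂ)-3) ≠ 0 := by
      have : ((4*n-3 : ℕ) : ℂ) = 4*(n:ℂ)-3 := by
        push_cast [Nat.cast_sub (by omega : 3 ≤ 4*n)]; ring
      rw [← this]; exact Nat.cast_ne_zero.mpr (by omega)
    have h43a : (-3 + (n:ℂ)*4) ≠ 0 := fun hh => h43 (by linear_combination hh)
    have h43b : (-15 + (n:ℂ)*20) ≠ 0 := fun hh => h43 (by linear_combination hh/5)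
    have hLite : ∀ (P : Prop) (inst : Decidable P)
        (z : (E ⊗[ℂ] H) ⊗[ℂ] (ExteriorAlgebra ℂ (E ⊗[ℂ] H))),
        D3 (D2 (D1 ((LinearMap.lTensor (E ⊗[ℂ] H) C4) (if P then z else 0))))
          = if P then D3 (D2 (D1 ((LinearMap.lTensor (E ⊗[ℂ] H) C4) z))) else 0 := by
      intro P inst z; split <;> simp
    have hswap : ∀ (P : Prop) (inst : Decidable P) (f : Fin n → H ⊗[ℂ] E),
        (∑ x1 : Fin n, if P then f x1 else 0) = if P then ∑ x1 : Fin n, f x1 else 0 := by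
      intro P inst f; split <;> simp
    have key : D3 (D2 (D1 ((LinearMap.lTensor (E ⊗[ℂ] H) C4)
        (Xi n e te h th B ic (te (Sum.inl ⟨0, by omega⟩) ⊗ₜ h)
          (alpha0 n hn e te h th)))))
        = ((8*n*(2*n+1) : ℂ) / (5*(4*n - 3))) • (h ⊗ₜ e (Sum.inl ⟨1, by omega⟩)) := by
      simp only [Xi, Tcal, alpha0, Fintype.sum_sum_type, hte1, hte2]
      simp only [TensorProduct.neg_tmul, map_sum, map_sub, map_add, map_neg, map_smul, hic, hB,
        wedge3_neg₁, wedge3_neg₂, wedge3_neg₃, wedge4_neg₁, wedge4_neg₂, wedge4_neg₃,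
        wedge4_neg₄, hunit, heL, heR, hH1, hH2, hH3, hH4,
        mul_ite, ite_mul, mul_one, one_mul, mul_zero, zero_mul, mul_neg, neg_mul,
        ite_smul, one_smul, zero_smul, neg_smul, smul_neg, neg_neg,
        Finset.sum_ite_eq, Finset.sum_ite_eq', Finset.mem_univ, if_true,
        Sum.inl.injEq, Sum.inr.injEq, reduceCtorEq, if_false, if_true,
        smul_zero, zero_smul, add_zero, zero_add, sub_zero, zero_sub, neg_zero,
        Finset.sum_const, Finset.card_univ, Fintype.card_fin, Finset.sum_neg_distrib]
      simp only [Fin.mk.injEq, Nat.zero_ne_one, Nat.one_ne_zero, if_false, if_true,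
        neg_zero, sub_zero, zero_sub, add_zero, zero_add, neg_neg, smul_zero, smul_neg]
      simp only [mul_add, mul_sub, mul_neg, mul_ite, mul_zero, Finset.mul_sum, mul_smul_comm, hmul3]
      simp only [TensorProduct.tmul_add, TensorProduct.tmul_sub, TensorProduct.tmul_neg,
        TensorProduct.tmul_smul, TensorProduct.tmul_sum, TensorProduct.tmul_ite,
        TensorProduct.tmul_zero, LinearMap.lTensor_tmul, map_sum, map_add, map_sub,
        map_neg, map_smul, map_zero, smul_ite, smul_zero,
        phi ωE ωH C4 hC4 D1 hD1 D2 hD2 D3 hD3]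
      simp only [gterm, hH1, hH2, hH3, hH4, hunit, heL, heR,
        Sum.inl.injEq, Sum.inr.injEq, reduceCtorEq, Fin.mk.injEq, Nat.zero_ne_one,
        Nat.one_ne_zero, mul_ite, ite_mul, mul_one, one_mul, mul_zero, zero_mul,
        mul_neg, neg_mul, ite_smul, smul_ite, one_smul, zero_smul, smul_zero,
        neg_smul, smul_neg, neg_neg, smul_smul, if_false, if_true,
        Finset.sum_ite_eq, Finset.sum_ite_eq', Finset.mem_univ,
        add_zero, zero_add, sub_zero, zero_sub, neg_zero, sub_self,
        Finset.sum_const, Finset.card_univ, Fintype.card_fin,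
        Finset.sum_neg_distrib, Finset.sum_add_distrib, Finset.sum_sub_distrib,
        smul_add, smul_sub]
      try simp only [hLite, hswap, smul_ite, smul_zero, Finset.sum_ite_eq,
        Finset.sum_ite_eq', Finset.mem_univ, if_true, Finset.sum_neg_distrib, neg_zero]
      try simp only [mul_add, mul_sub, mul_neg, mul_ite, mul_zero, Finset.mul_sum,
        mul_smul_comm, hmul3]
      try simp only [TensorProduct.tmul_add, TensorProduct.tmul_sub, TensorProduct.tmul_neg,
        TensorProduct.tmul_smul, TensorProduct.tmul_sum, TensorProduct.tmul_ite,
        TensorProduct.tmul_zero, LinearMap.lTensor_tmul, map_sum, map_add, map_sub,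
        map_neg, map_smul, map_zero, smul_ite, smul_zero,
        phi ωE ωH C4 hC4 D1 hD1 D2 hD2 D3 hD3]
      try simp only [gterm, hH1, hH2, hH3, hH4, hunit, heL, heR,
        Sum.inl.injEq, Sum.inr.injEq, reduceCtorEq, Fin.mk.injEq, Nat.zero_ne_one,
        Nat.one_ne_zero, mul_ite, ite_mul, mul_one, one_mul, mul_zero, zero_mul,
        mul_neg, neg_mul, ite_smul, smul_ite, one_smul, zero_smul, smul_zero,
        neg_smul, smul_neg, neg_neg, smul_smul, if_false, if_true,
        Finset.sum_ite_eq, Finset.sum_ite_eq', Finset.mem_univ,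
        add_zero, zero_add, sub_zero, zero_sub, neg_zero, sub_self,
        Finset.sum_const, Finset.card_univ, Fintype.card_fin,
        Finset.sum_neg_distrib, Finset.sum_add_distrib, Finset.sum_sub_distrib,
        smul_add, smul_sub]
      try simp only [hswap, smul_ite, smul_zero, Finset.sum_ite_eq, Finset.sum_ite_eq',
        Finset.mem_univ, if_true, Finset.sum_neg_distrib, neg_zero, neg_neg,
        sub_zero, zero_sub, add_zero, zero_add]
      try simp only [hLite, hswap, smul_ite, smul_zero, Finset.sum_ite_eq,
        Finset.sum_ite_eq', Finset.mem_univ, if_true, Finset.sum_neg_distrib, neg_zero]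
      try simp only [mul_add, mul_sub, mul_neg, mul_ite, mul_zero, Finset.mul_sum,
        mul_smul_comm, hmul3]
      try simp only [TensorProduct.tmul_add, TensorProduct.tmul_sub, TensorProduct.tmul_neg,
        TensorProduct.tmul_smul, TensorProduct.tmul_sum, TensorProduct.tmul_ite,
        TensorProduct.tmul_zero, LinearMap.lTensor_tmul, map_sum, map_add, map_sub,
        map_neg, map_smul, map_zero, smul_ite, smul_zero,
        phi ωE ωH C4 hC4 D1 hD1 D2 hD2 D3 hD3]
      try simp only [gterm, hH1, hH2, hH3, hH4, hunit, heL, heR,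
        Sum.inl.injEq, Sum.inr.injEq, reduceCtorEq, Fin.mk.injEq, Nat.zero_ne_one,
        Nat.one_ne_zero, mul_ite, ite_mul, mul_one, one_mul, mul_zero, zero_mul,
        mul_neg, neg_mul, ite_smul, smul_ite, one_smul, zero_smul, smul_zero,
        neg_smul, smul_neg, neg_neg, smul_smul, if_false, if_true,
        Finset.sum_ite_eq, Finset.sum_ite_eq', Finset.mem_univ,
        add_zero, zero_add, sub_zero, zero_sub, neg_zero, sub_self,
        Finset.sum_const, Finset.card_univ, Fintype.card_fin,
        Finset.sum_neg_distrib, Finset.sum_add_distrib, Finset.sum_sub_distrib,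
        smul_add, smul_sub]
      try simp only [hswap, smul_ite, smul_zero, Finset.sum_ite_eq, Finset.sum_ite_eq',
        Finset.mem_univ, if_true, Finset.sum_neg_distrib, neg_zero, neg_neg,
        sub_zero, zero_sub, add_zero, zero_add]
      simp only [← Nat.cast_smul_eq_nsmul ℂ]
      match_scalars
      ring_nf
      rw [show (-15 + (n:ℂ)*20) = 5*(-3 + (n:ℂ)*4) by ring, mul_inv]
      field_simp
      ring
    refine ⟨key, ?_⟩
    rw [key]
    apply smul_ne_zero
    · exact div_ne_zero (by exact mul_ne_zero (mul_ne_zero (by norm_num) hn0) h2n1)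
        (mul_ne_zero (by norm_num) h43)
    · have hbe : h ⊗ₜ[ℂ] e (Sum.inl ⟨1, by omega⟩)
          = (Module.Basis.tensorProduct bH bE) (0, Sum.inl ⟨1, by omega⟩) := by
        rw [Module.Basis.tensorProduct_apply, hbH0, hbE]
      rw [hbe]
      exact Module.Basis.ne_zero _ _
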